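/- arXiv:1905.10802 — 2 statements merged into one kernel-verified Lean document; each statement's English description precedes it below -/
import Mathlib

section
/- Möbius matrix-vector multiplication is associative: for matrices M ∈ R^{m×k}, N ∈ R^{k×n} and p in the open unit ball B^n with Np ≠ 0 and MNp ≠ 0, (MN) ⊗ p = M ⊗ (N ⊗ p). -/
open Real
open scoped RealInnerProductSpace Classical
noncomputable section

/-- Inverse hyperbolic cosine. -/
noncomputable def arcosh (x : ℝ) : ℝ := Real.log (x + Real.sqrt (x ^ 2 - 1))

/-- Inverse hyperbolic tangent. -/
noncomputable def artanh (x : ℝ) : ℝ := Real.log ((1 + x) / (1 - x)) / 2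

/-- Möbius addition on the Poincaré ball. -/
noncomputable def mobiusAdd {n : ℕ} (u v : EuclideanSpace ℝ (Fin n)) :
    EuclideanSpace ℝ (Fin n) :=
  (1 / (1 + 2 * ⟪u, v⟫ + ‖u‖ ^ 2 * ‖v‖ ^ 2)) •
    ((1 + 2 * ⟪u, v⟫ + ‖v‖ ^ 2) • u + (1 - ‖u‖ ^ 2) • v)

/-- Möbius scalar multiplication on the Poincaré ball. -/
noncomputable def mobiusSmul {n : ℕ} (k : ℝ) (p : EuclideanSpace ℝ (Fin n)) :
    EuclideanSpace ℝ (Fin n) :=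
  if p = 0 then 0 else (Real.tanh (k * _root_.artanh ‖p‖) / ‖p‖) • p

/-- Exponential map at the origin of the Poincaré ball. -/
noncomputable def expZero {n : ℕ} (w : EuclideanSpace ℝ (Fin n)) :
    EuclideanSpace ℝ (Fin n) :=
  if w = 0 then 0 else (Real.tanh ‖w‖ / ‖w‖) • w

/-- Logarithmic map at the origin of the Poincaré ball. -/
noncomputable def logZero {n : ℕ} (u : EuclideanSpace ℝ (Fin n)) :
    EuclideanSpace ℝ (Fin n) :=
  if u = 0 then 0 else (_root_.artanh ‖u‖ / ‖u‖) • u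

/-- View a plain vector as a point of Euclidean space. -/
def toE {m : ℕ} (x : Fin m → ℝ) : EuclideanSpace ℝ (Fin m) :=
  (WithLp.equiv 2 (Fin m → ℝ)).symm x

/-- View a point of Euclidean space as a plain vector. -/
def fromE {m : ℕ} (x : EuclideanSpace ℝ (Fin m)) : Fin m → ℝ :=
  WithLp.equiv 2 (Fin m → ℝ) x

/-- Möbius matrix-vector multiplication. -/
noncomputable def mobiusMat {m n : ℕ} (M : Matrix (Fin m) (Fin n) ℝ)
    (p : EuclideanSpace ℝ (Fin n)) : EuclideanSpace ℝ (Fin m) :=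
  if toE (M.mulVec (fromE p)) = 0 then 0
  else (Real.tanh ((‖toE (M.mulVec (fromE p))‖ / ‖p‖) * _root_.artanh ‖p‖) /
      ‖toE (M.mulVec (fromE p))‖) • toE (M.mulVec (fromE p))

lemma artanh_tanh' (t : ℝ) : _root_.artanh (Real.tanh t) = t := by
  have hc : 0 < Real.cosh t := (Real.cosh_pos t)
  have h1 : (1 + Real.tanh t) / (1 - Real.tanh t) = Real.exp (2 * t) := by
    rw [Real.tanh_eq_sinh_div_cosh]
    have : (1 + Real.sinh t / Real.cosh t) / (1 - Real.sinh t / Real.cosh t)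
        = (Real.cosh t + Real.sinh t) / (Real.cosh t - Real.sinh t) := by
      field_simp
    rw [this, Real.cosh_add_sinh, Real.cosh_sub_sinh, ← Real.exp_sub]
    ring_nf
  rw [_root_.artanh, h1, Real.log_exp]; ring

lemma tanh_pos' {t : ℝ} (ht : 0 < t) : 0 < Real.tanh t := by
  rw [Real.tanh_eq_sinh_div_cosh]
  exact div_pos (by rwa [Real.sinh_pos_iff]) (Real.cosh_pos t)

lemma artanh_pos' {x : ℝ} (h0 : 0 < x) (h1 : x < 1) : 0 < _root_.artanh x := by
  unfold _root_.artanh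
  have h : (1:ℝ) < (1 + x) / (1 - x) := by
    rw [lt_div_iff₀ (by linarith)]; linarith
  have := Real.log_pos h
  linarith

/-- Poincaré distance on the open unit ball. -/
noncomputable def poincareDist {n : ℕ} (u v : EuclideanSpace ℝ (Fin n)) : ℝ :=
  2 * _root_.artanh ‖mobiusAdd (-u) v‖

theorem mobiusMat_assoc {m k n : ℕ} (M : Matrix (Fin m) (Fin k) ℝ)
    (N : Matrix (Fin k) (Fin n) ℝ) (p : EuclideanSpace ℝ (Fin n))
    (hp : ‖p‖ < 1)
    (hN : toE (N.mulVec (fromE p)) ≠ 0)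
    (hMN : toE ((M * N).mulVec (fromE p)) ≠ 0) :
    mobiusMat (M * N) p = mobiusMat M (mobiusMat N p) := by
  classical
  set A := toE (N.mulVec (fromE p)) with hAdef
  set B := toE ((M * N).mulVec (fromE p)) with hBdef
  have hpne : p ≠ 0 := by
    rintro rfl
    apply hN
    have : fromE (0 : EuclideanSpace ℝ (Fin n)) = 0 := rfl
    simp [hAdef, this, Matrix.mulVec_zero, toE]
  have hpnorm : 0 < ‖p‖ := norm_pos_iff.mpr hpne
  have hAnorm : 0 < ‖A‖ := norm_pos_iff.mpr hN
  have hBnorm : 0 < ‖B‖ := norm_pos_iff.mpr hMN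
  set t := (‖A‖ / ‖p‖) * _root_.artanh ‖p‖ with htdef
  have ht : 0 < t := mul_pos (div_pos hAnorm hpnorm) (artanh_pos' hpnorm hp)
  set c := Real.tanh t / ‖A‖ with hcdef
  have hc : 0 < c := div_pos (tanh_pos' ht) hAnorm
  have hq : mobiusMat N p = c • A := by
    rw [mobiusMat, if_neg hN]
  have hfrom : fromE (c • A) = c • N.mulVec (fromE p) := rfl
  have hMq : toE (M.mulVec (fromE (mobiusMat N p))) = c • B := by
    rw [hq, hfrom, Matrix.mulVec_smul, Matrix.mulVec_mulVec]
    rfl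
  have hcB : (c • B : EuclideanSpace ℝ (Fin m)) ≠ 0 := smul_ne_zero hc.ne' hMN
  have hnormq : ‖mobiusMat N p‖ = Real.tanh t := by
    rw [hq, norm_smul, Real.norm_eq_abs, abs_of_pos hc, hcdef,
      div_mul_cancel₀ _ hAnorm.ne']
  have hnormcB : ‖(c • B : EuclideanSpace ℝ (Fin m))‖ = c * ‖B‖ := by
    rw [norm_smul, Real.norm_eq_abs, abs_of_pos hc]
  have hT : Real.tanh t ≠ 0 := (tanh_pos' ht).ne'
  clear_value A B
  clear_value t c
  rw [mobiusMat, mobiusMat, hMq, ← hBdef, if_neg hMN, if_neg hcB, hnormq, hnormcB,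
    artanh_tanh', smul_smul]
  have harg : c * ‖B‖ / Real.tanh t * t = ‖B‖ / ‖p‖ * _root_.artanh ‖p‖ := by
    have h1 : c * ‖B‖ / Real.tanh t = ‖B‖ / ‖A‖ := by
      rw [hcdef]; field_simp [hT]
    rw [h1, htdef]; field_simp
  rw [harg]
  congr 1
  rw [hcdef]
  field_simp
end
end

section
/- Möbius scalar multiplication is distributive over addition of scalars in the gyrovector sense: for all j, k ∈ R and p in the open unit ball, (j + k) ⊗ p = (j ⊗ p) ⊕ (k ⊗ p). -/
open Real
open scoped RealInnerProductSpace Classical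
noncomputable section

lemma tanh_sq_lt_one (x : ℝ) : Real.tanh x ^ 2 < 1 := by
  rw [Real.tanh_eq_sinh_div_cosh, div_pow, div_lt_one (by positivity)]
  nlinarith [Real.cosh_sq x, Real.cosh_pos x]

lemma one_add_tanh_mul_pos (x y : ℝ) : 0 < 1 + Real.tanh x * Real.tanh y := by
  nlinarith [_root_.tanh_sq_lt_one x, _root_.tanh_sq_lt_one y, sq_nonneg (Real.tanh x + Real.tanh y),
    sq_nonneg (Real.tanh x - Real.tanh y)]

lemma tanh_add' (x y : ℝ) :
    Real.tanh (x + y) = (Real.tanh x + Real.tanh y) / (1 + Real.tanh x * Real.tanh y) := by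
  have hx := (Real.cosh_pos x).ne'
  have hy := (Real.cosh_pos y).ne'
  have hne : Real.cosh x * Real.cosh y + Real.sinh x * Real.sinh y ≠ 0 := by
    rw [← Real.cosh_add]; exact (Real.cosh_pos _).ne'
  have h := (one_add_tanh_mul_pos x y).ne'
  rw [Real.tanh_eq_sinh_div_cosh x, Real.tanh_eq_sinh_div_cosh y] at h
  rw [Real.tanh_eq_sinh_div_cosh, Real.tanh_eq_sinh_div_cosh, Real.tanh_eq_sinh_div_cosh,
    Real.sinh_add, Real.cosh_add]
  field_simp

theorem mobiusSmul_add_distrib {n : ℕ} (j k : ℝ) (p : EuclideanSpace ℝ (Fin n))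
    (hp : ‖p‖ < 1) :
    mobiusSmul (j + k) p = mobiusAdd (mobiusSmul j p) (mobiusSmul k p) := by
  by_cases hp0 : p = 0
  · simp [hp0, mobiusSmul, mobiusAdd]
  · have hr : (0:ℝ) < ‖p‖ := norm_pos_iff.mpr hp0
    set r := ‖p‖ with hrdef
    set a := _root_.artanh r with ha
    set s := Real.tanh (j * a) with hs
    set t := Real.tanh (k * a) with ht
    have hst : 0 < 1 + s * t := one_add_tanh_mul_pos _ _
    have hlhs : mobiusSmul (j + k) p = ((s + t) / ((1 + s * t) * r)) • p := by
      rw [mobiusSmul, if_neg hp0]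
      simp only [← hrdef, ← ha]
      congr 1
      rw [add_mul, tanh_add']
      rw [← hs, ← ht]
      field_simp
    rw [hlhs, mobiusSmul, mobiusSmul, if_neg hp0, if_neg hp0, mobiusAdd]
    simp only [← hrdef, ← ha, ← hs, ← ht]
    have hip : ⟪(s / r) • p, (t / r) • p⟫ = s * t := by
      rw [real_inner_smul_left, real_inner_smul_right, real_inner_self_eq_norm_sq]
      field_simp
      ring
    have hnu : ‖(s / r) • p‖ ^ 2 = s ^ 2 := by
      rw [norm_smul, mul_pow, ← hrdef, Real.norm_eq_abs, sq_abs, div_pow]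
      field_simp
    have hnv : ‖(t / r) • p‖ ^ 2 = t ^ 2 := by
      rw [norm_smul, mul_pow, ← hrdef, Real.norm_eq_abs, sq_abs, div_pow]
      field_simp
    rw [hip, hnu, hnv, smul_smul, smul_smul, ← add_smul, smul_smul]
    congr 1
    have hden : 1 + 2 * (s * t) + s ^ 2 * t ^ 2 = (1 + s * t) ^ 2 := by ring
    rw [hden]
    field_simp
    ring
end
end
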